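/- For every n ≥ 2, the Narayana-type polynomial F_{n,2}(t) = Σ_{k=0}^{n-1} C(n,k) C(n,k+1) t^k has only real zeros, all of which are negative. -/

import Mathlib

open Polynomial Finset

/-- The Narayana-type polynomial `F n 2 (t) = ∑_{k=0}^{n-1} C(n,k) C(n,k+1) t^k`. -/
noncomputable def narayanaPoly (n : ℕ) : Polynomial ℝ :=
  ∑ k ∈ Finset.range n,
    Polynomial.C ((n.choose k : ℝ) * (n.choose (k + 1) : ℝ)) * Polynomial.X ^ k

section Aux

-- Vandermonde variant
lemma vdm (n M : ℕ) :
    ∑ k ∈ range (M+1), M.choose k * n.choose (k+1) = (n+M).choose (M+1) := by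
  have hs := Finset.sum_range_succ' (fun k => n.choose k * M.choose (M+1-k)) (M+1)
  rw [Nat.add_choose_eq, Finset.Nat.sum_antidiagonal_eq_sum_range_succ_mk, hs]
  have h0 : n.choose 0 * M.choose (M+1-0) = 0 := by
    simp [Nat.choose_eq_zero_of_lt]
  rw [h0, add_zero]
  apply Finset.sum_congr rfl
  intro k hk
  have hkM : k ≤ M := Nat.lt_succ_iff.mp (mem_range.mp hk)
  have : M + 1 - (k+1) = M - k := by omega
  rw [this, ← Nat.choose_symm hkM]
  ring

lemma key_nat (n M : ℕ) (hM : M ≤ n) :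
    ∑ k ∈ range (M+1), n.choose k * n.choose (k+1) * (n-k).choose (M-k)
      = n.choose M * (n+M).choose (M+1) := by
  have : ∀ k ∈ range (M+1), n.choose k * n.choose (k+1) * (n-k).choose (M-k)
      = n.choose M * (M.choose k * n.choose (k+1)) := by
    intro k hk
    have hkM : k ≤ M := Nat.lt_succ_iff.mp (mem_range.mp hk)
    have h := Nat.choose_mul (n := n) hkM
    calc n.choose k * n.choose (k+1) * (n-k).choose (M-k)
        = (n.choose k * (n-k).choose (M-k)) * n.choose (k+1) := by ring
      _ = (n.choose M * M.choose k) * n.choose (k+1) := by rw [← h]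
      _ = n.choose M * (M.choose k * n.choose (k+1)) := by ring
  rw [Finset.sum_congr rfl this, ← Finset.mul_sum, vdm]

lemma iter_deriv_sum {ι : Type*} (m : ℕ) (s : Finset ι) (f : ι → ℝ[X]) :
    derivative^[m] (∑ i ∈ s, f i) = ∑ i ∈ s, derivative^[m] (f i) := by
  induction m with
  | zero => simp
  | succ m ih => simp [Function.iterate_succ_apply', ih, derivative_sum]

lemma lemA (n : ℕ) (hn : 1 ≤ n) :
    derivative^[n-1] ((X*(X+1))^n : ℝ[X]) =
      ∑ j ∈ range (n+1),
        C (((n.choose j) * ((n+j).descFactorial (n-1)) : ℕ) : ℝ) * X^(j+1) := by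
  have hp : ((X*(X+1))^n : ℝ[X]) = ∑ j ∈ range (n+1), C ((n.choose j : ℕ) : ℝ) * X^(n+j) := by
    rw [mul_pow, add_pow]
    rw [Finset.mul_sum]
    apply Finset.sum_congr rfl
    intro j hj
    have : ((n.choose j : ℕ) : ℝ[X]) = C ((n.choose j : ℕ) : ℝ) := by
      simp [C_eq_natCast]
    rw [this, one_pow, pow_add]
    ring
  rw [hp, iter_deriv_sum]
  apply Finset.sum_congr rfl
  intro j hj
  rw [iterate_derivative_C_mul, iterate_derivative_X_pow_eq_natCast_mul]
  have h1 : n + j - (n-1) = j + 1 := by omega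
  rw [h1]
  have : (((n+j).descFactorial (n-1) : ℕ) : ℝ[X]) = C (((n+j).descFactorial (n-1) : ℕ) : ℝ) := by
    simp [C_eq_natCast]
  rw [this, ← mul_assoc, ← C_mul]
  push_cast
  ring

noncomputable def auxG (n : ℕ) : ℝ[X] :=
  ∑ k ∈ range (n+1), C ((n.choose k * n.choose (k+1) : ℕ) : ℝ) * ((1+X)^(n-k) * X^k)

lemma lemB (n : ℕ) (hn : 1 ≤ n) :
    (∑ j ∈ range (n+1),
        C (((n.choose j) * ((n+j).descFactorial (n-1)) : ℕ) : ℝ) * X^(j+1))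
      = C (((n-1).factorial : ℕ) : ℝ) * (X * auxG n) := by
  have hXG : X * auxG n
      = ∑ k ∈ range (n+1), C ((n.choose k * n.choose (k+1) : ℕ) : ℝ) * ((1+X)^(n-k) * X^(k+1)) := by
    rw [auxG, Finset.mul_sum]
    apply Finset.sum_congr rfl
    intro k hk
    ring
  rw [hXG, Finset.mul_sum]
  apply Polynomial.ext
  intro m
  rw [finset_sum_coeff, finset_sum_coeff]
  cases m with
  | zero =>
    apply Finset.sum_congr rfl
    intro k hk
    simp [coeff_mul_X_pow', coeff_X_pow]
  | succ M =>
    have hL : ∀ j ∈ range (n+1),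
        (C (((n.choose j) * ((n+j).descFactorial (n-1)) : ℕ) : ℝ) * X^(j+1)).coeff (M+1)
        = if j = M then (((n.choose j) * ((n+j).descFactorial (n-1)) : ℕ) : ℝ) else 0 := by
      intro j hj
      rw [coeff_C_mul, coeff_X_pow]
      by_cases h : j = M <;> simp [h]
      omega
    have hR : ∀ k ∈ range (n+1),
        (C ((((n-1).factorial : ℕ)) : ℝ) *
          (C ((n.choose k * n.choose (k+1) : ℕ) : ℝ) * ((1+X)^(n-k) * X^(k+1)))).coeff (M+1)
        = if k ≤ M then (((n-1).factorial * (n.choose k * n.choose (k+1)) : ℕ) : ℝ)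
            * (((n-k).choose (M-k) : ℕ) : ℝ) else 0 := by
      intro k hk
      have hc : ((1+X)^(n-k) * X^(k+1) : ℝ[X]).coeff (M+1)
          = if k ≤ M then (((n-k).choose (M-k) : ℕ) : ℝ) else 0 := by
        rw [coeff_mul_X_pow']
        by_cases h : k ≤ M
        · rw [if_pos (by omega : k+1 ≤ M+1), if_pos h]
          have h2 : M + 1 - (k+1) = M - k := by omega
          rw [h2, coeff_one_add_X_pow]
        · rw [if_neg (by omega), if_neg h]
      rw [coeff_C_mul, coeff_C_mul, hc]
      by_cases h : k ≤ M <;> simp only [if_pos, if_neg, h, ite_true, ite_false, mul_zero] <;>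
        push_cast <;> ring
    rw [Finset.sum_congr rfl hL, Finset.sum_congr rfl hR]
    rw [Finset.sum_ite_eq' (range (n+1)) M]
    by_cases hM : M ≤ n
    · rw [if_pos (by simp; omega)]
      rw [Finset.sum_ite, Finset.sum_const_zero, add_zero]
      have hfilter : Finset.filter (fun k => k ≤ M) (range (n+1)) = range (M+1) := by
        ext k; simp; omega
      rw [hfilter]
      have hsym : (n+M).choose (n-1) = (n+M).choose (M+1) := by
        rw [← Nat.choose_symm (by omega : n-1 ≤ n+M)]
        congr 1
        omega
      have hnat : (n.choose M) * ((n+M).descFactorial (n-1))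
          = ∑ k ∈ range (M+1),
              (n-1).factorial * (n.choose k * n.choose (k+1)) * ((n-k).choose (M-k)) := by
        rw [Nat.descFactorial_eq_factorial_mul_choose, hsym]
        calc n.choose M * ((n-1).factorial * (n+M).choose (M+1))
            = (n-1).factorial * (n.choose M * (n+M).choose (M+1)) := by ring
          _ = (n-1).factorial * ∑ k ∈ range (M+1),
                n.choose k * n.choose (k+1) * (n-k).choose (M-k) := by rw [← key_nat n M hM]
          _ = _ := by
              rw [Finset.mul_sum]
              apply Finset.sum_congr rfl
              intro k hk
              ring
      push_cast [hnat]
      apply Finset.sum_congr rfl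
      intro k hk
      ring
    · rw [if_neg (by simp; omega)]
      symm
      apply Finset.sum_eq_zero
      intro k hk
      by_cases h : k ≤ M
      · rw [if_pos h]
        have : (n-k).choose (M-k) = 0 := Nat.choose_eq_zero_of_lt (by
          have := mem_range.mp hk; omega)
        simp [this]
      · rw [if_neg h]

lemma rolle_chain (p : ℝ[X]) (m : ℕ) :
    Multiset.card p.roots ≤ Multiset.card ((derivative^[m] p).roots) + m := by
  induction m with
  | zero => simp
  | succ m ih =>
    refine ih.trans ?_
    have := Polynomial.card_roots_le_derivative (derivative^[m] p)
    rw [Function.iterate_succ_apply']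
    omega

lemma roots_p (n : ℕ) : Multiset.card (((X*(X+1))^n : ℝ[X]).roots) = 2*n := by
  have h1 : (X*(X+1) : ℝ[X]) ≠ 0 := by
    intro h
    have := congrArg (fun q => Polynomial.coeff q 1) h
    simp [mul_add, coeff_X] at this
  rw [roots_pow, Multiset.card_nsmul]
  have hx1 : (X + 1 : ℝ[X]) = X - C (-1) := by simp
  rw [roots_mul h1, roots_X, hx1, roots_X_sub_C]
  simp [mul_comm]

lemma natdeg_p (n : ℕ) : ((X*(X+1))^n : ℝ[X]).natDegree = 2*n := by
  rw [natDegree_pow]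
  have hx1 : (X + 1 : ℝ[X]) = X + C 1 := by simp
  have h1 : (X + 1 : ℝ[X]) ≠ 0 := by
    intro h
    have := congrArg (fun q => Polynomial.coeff q 1) h
    simp [coeff_one] at this
  rw [natDegree_mul X_ne_zero h1, natDegree_X, hx1, natDegree_X_add_C]
  ring

lemma R_facts (n : ℕ) (hn : 1 ≤ n) :
    Multiset.card ((derivative^[n-1] ((X*(X+1))^n : ℝ[X])).roots)
      = (derivative^[n-1] ((X*(X+1))^n : ℝ[X])).natDegree ∧
    (derivative^[n-1] ((X*(X+1))^n : ℝ[X])) ≠ 0 := by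
  set R := derivative^[n-1] ((X*(X+1))^n : ℝ[X]) with hR
  have h1 : 2*n ≤ Multiset.card R.roots + (n-1) := by
    have h := rolle_chain ((X*(X+1))^n : ℝ[X]) (n-1)
    rw [roots_p, ← hR] at h
    exact h
  have h2 : R.natDegree ≤ 2*n - (n-1) := by
    have h := Polynomial.natDegree_iterate_derivative ((X*(X+1))^n : ℝ[X]) (n-1)
    rw [natdeg_p, ← hR] at h
    exact h
  have h3 : Multiset.card R.roots ≤ R.natDegree := Polynomial.card_roots' R
  have hne : R ≠ 0 := by
    intro h
    rw [h] at h1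
    simp at h1
    omega
  exact ⟨by omega, hne⟩

end Aux

theorem narayanaPoly_neg_real_rooted (n : ℕ) (hn : 2 ≤ n) :
    ∀ z : ℂ, ((narayanaPoly n).map (algebraMap ℝ ℂ)).IsRoot z →
      ∃ x : ℝ, x < 0 ∧ z = (x : ℂ) := by
  intro z hz
  have hn1 : 1 ≤ n := by omega
  set φ := algebraMap ℝ ℂ with hφ
  -- evaluation formula for the mapped Narayana polynomial
  have hFeval : ∀ x : ℂ, ((narayanaPoly n).map φ).eval x
      = ∑ k ∈ range n, ((n.choose k * n.choose (k+1) : ℕ) : ℂ) * x^k := by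
    intro x
    rw [narayanaPoly, Polynomial.map_sum, eval_finset_sum]
    apply Finset.sum_congr rfl
    intro k hk
    simp
  -- real positivity for x ≥ 0
  have hpos : ∀ x : ℝ, 0 ≤ x → 0 < (narayanaPoly n).eval x := by
    intro x hx
    rw [narayanaPoly, eval_finset_sum]
    apply Finset.sum_pos'
    · intro k hk
      simp only [eval_mul, eval_C, eval_pow, eval_X]
      positivity
    · refine ⟨0, mem_range.mpr (by omega), ?_⟩
      simp only [eval_mul, eval_C, eval_pow, eval_X, pow_zero, mul_one]
      rw [Nat.choose_zero_right, Nat.choose_one_right]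
      push_cast
      positivity
  -- z ≠ 1
  have h1z : (1 : ℂ) - z ≠ 0 := by
    intro h
    have hz1 : z = 1 := by linear_combination -h
    rw [hz1] at hz
    have := hz
    rw [Polynomial.IsRoot, hFeval 1] at this
    have h2 : ∑ k ∈ range n, ((n.choose k * n.choose (k+1) : ℕ) : ℂ) * (1:ℂ)^k
        = ((∑ k ∈ range n, n.choose k * n.choose (k+1) : ℕ) : ℂ) := by
      push_cast
      simp
    rw [h2] at this
    have h3 : (∑ k ∈ range n, n.choose k * n.choose (k+1)) ≠ 0 := by
      have h0 : 0 ∈ range n := mem_range.mpr (by omega)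
      refine (Finset.sum_pos' (fun k _ => Nat.zero_le _) ⟨0, h0, ?_⟩).ne'
      rw [Nat.choose_zero_right, Nat.choose_one_right]
      omega
    exact h3 (by exact_mod_cast this)
  -- the Möbius image
  set w : ℂ := z * (1 - z)⁻¹ with hw
  have h1w : 1 + w = (1 - z)⁻¹ := by
    rw [hw]
    field_simp
    ring
  -- R and its factorization
  set R : ℝ[X] := derivative^[n-1] ((X*(X+1))^n : ℝ[X]) with hRdef
  have hRGC : R = C (((n-1).factorial : ℕ) : ℝ) * (X * auxG n) := by
    rw [hRdef, lemA n hn1, lemB n hn1]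
  -- evaluate R at w
  have hGeval : ((auxG n).map φ).eval w = 0 := by
    have : ((auxG n).map φ).eval w
        = ∑ k ∈ range (n+1), ((n.choose k * n.choose (k+1) : ℕ) : ℂ) * ((1+w)^(n-k) * w^k) := by
      rw [auxG, Polynomial.map_sum, eval_finset_sum]
      apply Finset.sum_congr rfl
      intro k hk
      simp
    rw [this]
    have hterm : ∀ k ∈ range (n+1),
        ((n.choose k * n.choose (k+1) : ℕ) : ℂ) * ((1+w)^(n-k) * w^k)
        = (((n.choose k * n.choose (k+1) : ℕ) : ℂ) * z^k) * ((1-z)⁻¹)^n := by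
      intro k hk
      have hkn : k ≤ n := Nat.lt_succ_iff.mp (mem_range.mp hk)
      rw [h1w, hw, mul_pow]
      rw [show ((1-z)⁻¹)^(n-k) * (z^k * ((1-z)⁻¹)^k) = z^k * (((1-z)⁻¹)^(n-k) * ((1-z)⁻¹)^k) by ring]
      rw [← pow_add, Nat.sub_add_cancel hkn]
      ring
    rw [Finset.sum_congr rfl hterm, ← Finset.sum_mul]
    have hsplit : ∑ k ∈ range (n+1), (((n.choose k * n.choose (k+1) : ℕ) : ℂ) * z^k)
        = ((narayanaPoly n).map φ).eval z := by
      rw [Finset.sum_range_succ, hFeval]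
      have : n.choose (n+1) = 0 := Nat.choose_eq_zero_of_lt (by omega)
      rw [this]
      push_cast
      ring
    rw [hsplit, hz]
    ring
  have hRw : (R.map φ).eval w = 0 := by
    rw [hRGC]
    simp only [Polynomial.map_mul, Polynomial.map_C, map_X, eval_mul, eval_C, eval_X, hGeval]
    ring
  -- R splits over ℝ with all roots real
  obtain ⟨hcard, hRne⟩ := R_facts n hn1
  have hsplits : Splits R := (Polynomial.splits_iff_card_roots).mpr hcard
  have hrootsmap : (R.map φ).roots = R.roots.map φ := hsplits.roots_map φ
  have hRmapne : R.map φ ≠ 0 := by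
    intro h
    exact hRne (Polynomial.map_injective φ (algebraMap ℝ ℂ).injective (by simpa using h))
  have hwmem : w ∈ (R.map φ).roots := by
    rw [Polynomial.mem_roots hRmapne]
    exact hRw
  rw [hrootsmap, Multiset.mem_map] at hwmem
  obtain ⟨s, hs, hsw⟩ := hwmem
  -- 1 + s ≠ 0
  have h1s : (1 : ℝ) + s ≠ 0 := by
    intro h
    have : (1 : ℂ) + w = 0 := by
      rw [← hsw]
      have : ((1 + s : ℝ) : ℂ) = 0 := by rw [h]; simp
      simpa [hφ] using this
    rw [h1w] at this
    exact (inv_ne_zero h1z) this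
  have hzw : z * (1 + w) = w := by
    rw [h1w, hw]
  have h1wne : (1 : ℂ) + w ≠ 0 := by
    rw [h1w]
    exact inv_ne_zero h1z
  have hzeq : z = w * (1+w)⁻¹ := by
    field_simp at hzw ⊢
    linear_combination hzw
  have h1sC : (1:ℂ) + (s:ℂ) ≠ 0 := by
    intro h
    apply h1s
    have : ((1+s:ℝ):ℂ) = 0 := by push_cast; exact h
    exact_mod_cast this
  have hsC : φ s = (s : ℂ) := by simp [hφ]
  have hzx : z = ((s/(1+s) : ℝ) : ℂ) := by
    rw [hzeq, ← hsw, hsC]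
    push_cast
    rw [div_eq_mul_inv]
  refine ⟨s/(1+s), ?_, hzx⟩
  by_contra hge
  push_neg at hge
  rw [hzx] at hz
  have hcast : ((s/(1+s):ℝ):ℂ) = φ (s/(1+s)) := by simp [hφ]
  rw [Polynomial.IsRoot, hcast, Polynomial.eval_map, Polynomial.eval₂_at_apply] at hz
  have h0 : (narayanaPoly n).eval (s/(1+s)) = 0 := by
    have h2 : (((narayanaPoly n).eval (s/(1+s)) : ℝ) : ℂ) = 0 := by
      rw [← hz]; simp [hφ]
    exact_mod_cast h2
  exact absurd h0 (ne_of_gt (hpos _ hge))
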